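/- Let z = x + 3√3·i·y with x, y nonzero integers. Then Arg(z) is not a rational multiple of π. -/

import Mathlib

/-- Integer coordinates of `(x + 3√3 y i)^n`. -/
def stmt16XY (x y : ℤ) : ℕ → ℤ × ℤ
  | 0 => (1, 0)
  | n + 1 =>
      (x * (stmt16XY x y n).1 - 27 * y * (stmt16XY x y n).2,
       x * (stmt16XY x y n).2 + y * (stmt16XY x y n).1)

lemma stmt16_pow (x y : ℤ) (n : ℕ) :
    ((x : ℂ) + 3 * Real.sqrt 3 * (y : ℝ) * Complex.I) ^ n
      = ((stmt16XY x y n).1 : ℂ)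
        + 3 * Real.sqrt 3 * ((stmt16XY x y n).2 : ℝ) * Complex.I := by
  induction n with
  | zero => simp [stmt16XY]
  | succ n ih =>
      have h3 : (Real.sqrt 3 : ℂ) ^ 2 = 3 := by
        norm_cast
        rw [Real.sq_sqrt]; norm_num
      rw [pow_succ, ih]
      simp only [stmt16XY]
      push_cast
      linear_combination (9 * (y : ℂ) * ((stmt16XY x y n).2 : ℂ) * Complex.I ^ 2) * h3
        + (27 * (y : ℂ) * ((stmt16XY x y n).2 : ℂ)) * Complex.I_sq

lemma stmt16_norm (x y : ℤ) (n : ℕ) :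
    (stmt16XY x y n).1 ^ 2 + 27 * (stmt16XY x y n).2 ^ 2 = (x ^ 2 + 27 * y ^ 2) ^ n := by
  induction n with
  | zero => simp [stmt16XY]
  | succ n ih =>
      rw [pow_succ (x ^ 2 + 27 * y ^ 2) n, ← ih]
      simp only [stmt16XY]
      ring

lemma stmt16_zmod (p : ℕ) (x y : ℤ) (c : ZMod p) (hc : c ^ 2 = -27) (n : ℕ) :
    ((stmt16XY x y n).1 : ZMod p) + c * ((stmt16XY x y n).2 : ZMod p)
      = ((x : ZMod p) + c * (y : ZMod p)) ^ n := by
  induction n with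
  | zero => simp [stmt16XY]
  | succ n ih =>
      simp only [stmt16XY, pow_succ]
      push_cast
      linear_combination ((x : ZMod p) + c * (y : ZMod p)) * ih
        - (y : ZMod p) * ((stmt16XY x y n).2 : ZMod p) * hc

theorem stmt_16 (p : ℕ) (hp : p.Prime) (hp3 : p % 3 = 1)
    (t : ℕ) (ht : 1 ≤ t) (x y : ℤ) (hx : x ≠ 0) (hy : y ≠ 0)
    (hxy : (p : ℤ) ^ t = x ^ 2 + 27 * y ^ 2) (hcop : Int.gcd x (p : ℤ) = 1) :
    ¬∃ r : ℚ, Complex.arg ((x : ℂ) + 3 * Real.sqrt 3 * (y : ℝ) * Complex.I) = r * Real.pi := by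
  rintro ⟨r, hr⟩
  set z : ℂ := (x : ℂ) + 3 * Real.sqrt 3 * (y : ℝ) * Complex.I with hz
  set n : ℕ := 2 * r.den with hn
  have hn1 : 1 ≤ n := by have := r.den_pos; omega
  -- z^n is real
  have him : (z ^ n).im = 0 := by
    conv_lhs => rw [← Complex.norm_mul_exp_arg_mul_I z]
    rw [mul_pow, ← Complex.exp_nat_mul]
    have harg : (n : ℂ) * (z.arg * Complex.I) = ((n * z.arg : ℝ) : ℂ) * Complex.I := by
      push_cast; ring
    rw [harg, ← Complex.ofReal_pow]
    have hsin : Real.sin (n * z.arg) = 0 := by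
      have heq : (n : ℝ) * z.arg = (2 * r.num : ℤ) * Real.pi := by
        rw [hr, hn]
        have hden : ((r.den : ℝ)) * (r : ℝ) = (r.num : ℝ) := by
          rw [Rat.cast_def]
          field_simp
        push_cast
        linear_combination 2 * Real.pi * hden
      rw [heq, Real.sin_int_mul_pi]
    rw [Complex.mul_im, Complex.ofReal_re, Complex.ofReal_im,
      Complex.exp_ofReal_mul_I_im, hsin]
    ring
  -- hence Y n = 0
  have hY : (stmt16XY x y n).2 = 0 := by
    have h := stmt16_pow x y n
    rw [← hz] at h
    rw [h] at him
    simp at him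
    exact_mod_cast him
  -- so X n ^ 2 = p ^ (t*n) and p ∣ X n
  have hXsq : (stmt16XY x y n).1 ^ 2 = (p : ℤ) ^ (t * n) := by
    have := stmt16_norm x y n
    rw [hY, ← hxy, ← pow_mul] at this
    simpa using this
  have hpX : (p : ℤ) ∣ (stmt16XY x y n).1 := by
    have h1 : 1 ≤ t * n := Nat.one_le_iff_ne_zero.mpr (by positivity)
    have hdvd : (p : ℤ) ∣ (stmt16XY x y n).1 ^ 2 := by
      rw [hXsq]
      exact dvd_pow_self _ (by omega)
    exact (Nat.prime_iff_prime_int.mp hp).dvd_of_dvd_pow hdvd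
  -- work in ZMod p
  haveI : Fact p.Prime := ⟨hp⟩
  have hp2 : p ≠ 2 := by rintro rfl; norm_num at hp3
  have hx0 : (x : ZMod p) ≠ 0 := by
    intro h
    rw [ZMod.intCast_zmod_eq_zero_iff_dvd] at h
    have : (p : ℤ) ∣ (Int.gcd x (p : ℤ) : ℤ) := Int.dvd_coe_gcd h dvd_rfl
    rw [hcop] at this
    have := Int.le_of_dvd one_pos this
    have := hp.two_le
    omega
  have hsum : (x : ZMod p) ^ 2 + 27 * (y : ZMod p) ^ 2 = 0 := by
    have := congrArg (Int.cast : ℤ → ZMod p) hxy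
    push_cast at this
    rw [ZMod.natCast_self, zero_pow (by omega)] at this
    exact this.symm
  have hy0 : (y : ZMod p) ≠ 0 := by
    intro h
    apply hx0
    have hx2 : (x : ZMod p) ^ 2 = 0 := by rw [h] at hsum; simpa using hsum
    exact pow_eq_zero_iff (two_ne_zero) |>.mp hx2
  set c : ZMod p := (x : ZMod p) * (y : ZMod p)⁻¹ with hcdef
  have hc : c ^ 2 = -27 := by
    have hx2 : (x : ZMod p) ^ 2 = -27 * (y : ZMod p) ^ 2 := by linear_combination hsum
    rw [hcdef, mul_pow, hx2, mul_assoc, ← mul_pow, mul_inv_cancel₀ hy0, one_pow, mul_one]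
  have hcy : c * (y : ZMod p) = (x : ZMod p) := by
    rw [hcdef, mul_assoc, inv_mul_cancel₀ hy0, mul_one]
  have hkey := stmt16_zmod p x y c hc n
  have hX0 : ((stmt16XY x y n).1 : ZMod p) = 0 := by
    rwa [ZMod.intCast_zmod_eq_zero_iff_dvd]
  rw [hX0, hY, hcy] at hkey
  push_cast at hkey
  have h2x : (x : ZMod p) + (x : ZMod p) ≠ 0 := by
    have h2 : (2 : ZMod p) ≠ 0 := by
      intro h
      have : ((2 : ℕ) : ZMod p) = 0 := by exact_mod_cast h
      rw [ZMod.natCast_eq_zero_iff] at this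
      exact hp2 ((Nat.prime_dvd_prime_iff_eq hp Nat.prime_two).mp this)
    intro h
    apply hx0
    have : (2 : ZMod p) * (x : ZMod p) = 0 := by linear_combination h
    rcases mul_eq_zero.mp this with h' | h'
    · exact absurd h' h2
    · exact h'
  have hzero : ((x : ZMod p) + (x : ZMod p)) ^ n = 0 := by
    rw [← hkey]; simp
  exact h2x (pow_eq_zero_iff (by omega : n ≠ 0) |>.mp hzero)
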